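/- Assume additionally that V_i → ∞ as i → ∞. Then for every integer r and every x ∈ ℚ_p the series Σ_{i=r+1}^{∞} V_{i−1}^{−1/2}(1 − V_{i−1}/V_i)^{1/2}·φ_i(x) converges absolutely and Ω(|x|_p p^{−r}) = V_r · Σ_{i=r+1}^{∞} V_{i−1}^{−1/2}(1 − V_{i−1}/V_i)^{1/2}·φ_i(x); that is, the indicator function of the ball |x|_p ≤ p^r is expanded in the family (φ_i) with coefficients V_r·V_{i−1}^{−1/2}(1 − V_{i−1}/V_i)^{1/2} for i ≥ r+1. -/

import Mathlib

open MeasureTheory Filter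

/-- `Ω(r) = 1` for `r ≤ 1` and `Ω(r) = 0` for `r > 1`. -/
noncomputable def Omega (r : ℝ) : ℝ := if r ≤ 1 then 1 else 0

/-- if moreover `V_i → ∞`, then the indicator of the ball `|x|_p ≤ p^r`
is expanded in the family `(φ_i)` as
`Ω(|x|_p p^{-r}) = V_r Σ_{i=r+1}^∞ V_{i-1}^{-1/2}(1 - V_{i-1}/V_i)^{1/2} φ_i(x)`,
the series converging absolutely. -/
theorem padic_ball_indicator_expansion
    (p : ℕ) [Fact p.Prime]
    [MeasurableSpace ℚ_[p]] [BorelSpace ℚ_[p]]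
    (μ : Measure ℚ_[p]) [μ.IsAddHaarMeasure]
    (hμ : μ (Metric.closedBall 0 1) = 1)
    (u : ℚ_[p] → ℝ) (hu_pos : ∀ x : ℚ_[p], 0 < u x)
    (hu_loc : LocallyIntegrable u μ)
    (V : ℤ → ℝ)
    (hVint : ∀ i : ℤ, Integrable (fun y : ℚ_[p] => u y * Omega (‖y‖ * (p : ℝ) ^ (-i))) μ)
    (hV : ∀ i : ℤ, V i = ∫ y : ℚ_[p], u y * Omega (‖y‖ * (p : ℝ) ^ (-i)) ∂μ)
    (hVmono : ∀ i : ℤ, V (i - 1) < V i)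
    (hVtop : Tendsto V atTop atTop)
    (φ : ℤ → ℚ_[p] → ℝ)
    (hφ : ∀ (i : ℤ) (x : ℚ_[p]), φ i x =
      (V (i - 1) * (1 - V (i - 1) / V i)) ^ (-(1 / 2 : ℝ)) *
        (Omega (‖x‖ * (p : ℝ) ^ (-i + 1)) - V (i - 1) / V i * Omega (‖x‖ * (p : ℝ) ^ (-i)))) :
    ∀ (r : ℤ) (x : ℚ_[p]),
      Summable (fun n : ℕ =>
        |(V (r + n)) ^ (-(1 / 2 : ℝ)) * (1 - V (r + n) / V (r + 1 + n)) ^ ((1 / 2 : ℝ)) *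
          φ (r + 1 + n) x|) ∧
      Omega (‖x‖ * (p : ℝ) ^ (-r)) =
        V r * ∑' n : ℕ,
          (V (r + n)) ^ (-(1 / 2 : ℝ)) * (1 - V (r + n) / V (r + 1 + n)) ^ ((1 / 2 : ℝ)) *
            φ (r + 1 + n) x := by

  -- preliminaries
  have hp1 : (1 : ℝ) < p := by exact_mod_cast (Fact.out : p.Prime).one_lt
  have hΩ0 : ∀ t : ℝ, 0 ≤ Omega t := by
    intro t; unfold Omega; split <;> norm_num
  have hΩ1 : ∀ t : ℝ, Omega t ≤ 1 := by
    intro t; unfold Omega; split <;> norm_num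
  have hVnonneg : ∀ i : ℤ, 0 ≤ V i := by
    intro i; rw [hV i]
    exact integral_nonneg fun y => mul_nonneg (hu_pos y).le (hΩ0 _)
  have hVpos : ∀ i : ℤ, 0 < V i := fun i =>
    lt_of_le_of_lt (hVnonneg (i - 1)) (hVmono i)
  have hVsm : StrictMono V := strictMono_int_of_lt_succ fun i => by
    simpa using hVmono (i + 1)
  intro r x
  set G : ℤ → ℝ := fun i => Omega (‖x‖ * (p : ℝ) ^ (-i)) / V i with hG
  set g : ℕ → ℝ := fun n => G (r + n) with hg
  -- the algebraic key: each term telescopes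
  have key : ∀ n : ℕ,
      (V (r + n)) ^ (-(1 / 2 : ℝ)) * (1 - V (r + n) / V (r + 1 + n)) ^ ((1 / 2 : ℝ)) *
        φ (r + 1 + n) x = g n - g (n + 1) := by
    intro n
    have ha : 0 < V (r + n) := hVpos _
    have hb : 0 < V (r + 1 + n) := hVpos _
    have hab : V (r + n) < V (r + 1 + n) := hVsm (by omega)
    have hq : 0 < 1 - V (r + n) / V (r + 1 + n) := by
      rw [sub_pos, div_lt_one hb]; exact hab
    rw [hφ]
    have h1 : r + 1 + (n : ℤ) - 1 = r + n := by ring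
    rw [h1, Real.mul_rpow ha.le hq.le]
    have e1 : (V (r + n)) ^ (-(1 / 2 : ℝ)) * (V (r + n)) ^ (-(1 / 2 : ℝ))
        = (V (r + n))⁻¹ := by
      rw [← Real.rpow_add ha]
      norm_num [Real.rpow_neg_one]
    have e2 : (1 - V (r + n) / V (r + 1 + n)) ^ ((1 / 2 : ℝ)) *
        (1 - V (r + n) / V (r + 1 + n)) ^ (-(1 / 2 : ℝ)) = 1 := by
      rw [← Real.rpow_add hq]
      norm_num
    have harg1 : -(r + 1 + (n : ℤ)) + 1 = -(r + (n : ℤ)) := by ring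
    have harg2 : r + ((n : ℕ) + 1 : ℕ) = r + 1 + (n : ℤ) := by push_cast; ring
    calc (V (r + n)) ^ (-(1 / 2 : ℝ)) * (1 - V (r + n) / V (r + 1 + n)) ^ ((1 / 2 : ℝ)) *
          ((V (r + n)) ^ (-(1 / 2 : ℝ)) * (1 - V (r + n) / V (r + 1 + n)) ^ (-(1 / 2 : ℝ)) *
            (Omega (‖x‖ * (p : ℝ) ^ (-(r + 1 + (n : ℤ)) + 1)) -
              V (r + n) / V (r + 1 + n) * Omega (‖x‖ * (p : ℝ) ^ (-(r + 1 + (n : ℤ))))))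
        = ((V (r + n)) ^ (-(1 / 2 : ℝ)) * (V (r + n)) ^ (-(1 / 2 : ℝ))) *
            ((1 - V (r + n) / V (r + 1 + n)) ^ ((1 / 2 : ℝ)) *
              (1 - V (r + n) / V (r + 1 + n)) ^ (-(1 / 2 : ℝ))) *
            (Omega (‖x‖ * (p : ℝ) ^ (-(r + 1 + (n : ℤ)) + 1)) -
              V (r + n) / V (r + 1 + n) * Omega (‖x‖ * (p : ℝ) ^ (-(r + 1 + (n : ℤ))))) := by
          ring
      _ = (V (r + n))⁻¹ *
            (Omega (‖x‖ * (p : ℝ) ^ (-(r + (n : ℤ)))) -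
              V (r + n) / V (r + 1 + n) * Omega (‖x‖ * (p : ℝ) ^ (-(r + 1 + (n : ℤ))))) := by
          rw [e1, e2, harg1]; ring
      _ = g n - g (n + 1) := by
          simp only [hg, hG, harg2]
          field_simp
  -- eventually the indicator is 1
  obtain ⟨N0, hN0⟩ := pow_unbounded_of_one_lt (R := ℝ) ‖x‖ hp1
  have hOm1 : ∀ m : ℤ, (N0 : ℤ) ≤ m → Omega (‖x‖ * (p : ℝ) ^ (-m)) = 1 := by
    intro m hm
    have hpm : (0 : ℝ) < (p : ℝ) ^ m := zpow_pos (by linarith) m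
    have hle : ‖x‖ ≤ (p : ℝ) ^ m := by
      calc ‖x‖ ≤ (p : ℝ) ^ (N0 : ℤ) := by
            rw [zpow_natCast]; exact hN0.le
        _ ≤ (p : ℝ) ^ m := zpow_le_zpow_right₀ hp1.le hm
    unfold Omega
    rw [if_pos]
    rw [zpow_neg]
    calc ‖x‖ * ((p : ℝ) ^ m)⁻¹ ≤ (p : ℝ) ^ m * ((p : ℝ) ^ m)⁻¹ := by
          apply mul_le_mul_of_nonneg_right hle (by positivity)
      _ = 1 := mul_inv_cancel₀ hpm.ne'
  set N : ℕ := (N0 - r).toNat with hN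
  have hNr : ∀ n : ℕ, (N0 : ℤ) ≤ r + (N + n : ℕ) := by
    intro n
    have : (N0 : ℤ) - r ≤ ((N0 - r).toNat : ℤ) := Int.self_le_toNat _
    push_cast
    omega
  -- g tends to 0
  have hVr : Tendsto (fun n : ℕ => V (r + n)) atTop atTop := by
    apply hVtop.comp
    exact tendsto_atTop_add_const_left atTop r tendsto_natCast_atTop_atTop
  have hg0 : Tendsto g atTop (nhds 0) := by
    apply squeeze_zero (g := fun n : ℕ => (V (r + n))⁻¹)
    · intro n
      exact div_nonneg (hΩ0 _) (hVpos _).le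
    · intro n
      simp only [hg, hG]
      rw [div_eq_mul_inv]
      calc Omega (‖x‖ * (p : ℝ) ^ (-(r + (n : ℤ)))) * (V (r + n))⁻¹
          ≤ 1 * (V (r + n))⁻¹ := by
            exact mul_le_mul_of_nonneg_right (hΩ1 _) (inv_nonneg.2 (hVpos _).le)
        _ = (V (r + n))⁻¹ := one_mul _
    · exact hVr.inv_tendsto_atTop
  -- summability
  have hsum_abs : Summable (fun n : ℕ =>
      |(V (r + n)) ^ (-(1 / 2 : ℝ)) * (1 - V (r + n) / V (r + 1 + n)) ^ ((1 / 2 : ℝ)) *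
        φ (r + 1 + n) x|) := by
    rw [← summable_nat_add_iff N]
    set f : ℕ → ℝ := fun n => (V (r + (N + n : ℕ)))⁻¹ with hf
    have hfpos : ∀ n, 0 < f n := fun n => inv_pos.2 (hVpos _)
    have hfanti : ∀ n, f (n + 1) ≤ f n := by
      intro n
      apply inv_anti₀ (hVpos _)
      apply (hVsm.le_iff_le).2
      push_cast; omega
    have hterm : ∀ n : ℕ,
        |(V (r + (n + N : ℕ))) ^ (-(1 / 2 : ℝ)) *
            (1 - V (r + (n + N : ℕ)) / V (r + 1 + (n + N : ℕ))) ^ ((1 / 2 : ℝ)) *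
          φ (r + 1 + (n + N : ℕ)) x| = f n - f (n + 1) := by
      intro n
      rw [key (n + N)]
      have hΩa : Omega (‖x‖ * (p : ℝ) ^ (-(r + ((n + N : ℕ) : ℤ)))) = 1 := by
        apply hOm1
        have := hNr n
        push_cast at this ⊢
        omega
      have hΩb : Omega (‖x‖ * (p : ℝ) ^ (-(r + (((n + N : ℕ) + 1 : ℕ) : ℤ)))) = 1 := by
        apply hOm1
        have := hNr (n + 1)
        push_cast at this ⊢
        omega
      have hga : g (n + N) = f n := by
        simp only [hg, hG, hf]
        rw [hΩa]
        rw [one_div]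
        congr 2
        push_cast; ring
      have hgb : g (n + N + 1) = f (n + 1) := by
        simp only [hg, hG, hf]
        rw [hΩb]
        rw [one_div]
        congr 2
        push_cast; ring
      rw [hga, hgb, abs_of_nonneg (by linarith [hfanti n])]
    apply Summable.congr (f := fun n => f n - f (n + 1)) _ (fun n => (hterm n).symm)
    apply summable_of_sum_range_le (c := f 0)
    · intro n; linarith [hfanti n]
    · intro n
      rw [Finset.sum_range_sub' f n]
      linarith [hfpos n]
  refine ⟨hsum_abs, ?_⟩
  -- compute the sum
  have hsummable : Summable (fun n : ℕ =>
      (V (r + n)) ^ (-(1 / 2 : ℝ)) * (1 - V (r + n) / V (r + 1 + n)) ^ ((1 / 2 : ℝ)) *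
        φ (r + 1 + n) x) := hsum_abs.of_abs
  have htel : Tendsto (fun m : ℕ => ∑ i ∈ Finset.range m,
      ((V (r + i)) ^ (-(1 / 2 : ℝ)) * (1 - V (r + i) / V (r + 1 + i)) ^ ((1 / 2 : ℝ)) *
        φ (r + 1 + i) x)) atTop (nhds (g 0)) := by
    have : ∀ m : ℕ, ∑ i ∈ Finset.range m,
        ((V (r + i)) ^ (-(1 / 2 : ℝ)) * (1 - V (r + i) / V (r + 1 + i)) ^ ((1 / 2 : ℝ)) *
          φ (r + 1 + i) x) = g 0 - g m := by
      intro m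
      rw [← Finset.sum_range_sub' g m]
      exact Finset.sum_congr rfl fun i _ => key i
    simp only [this]
    simpa using tendsto_const_nhds.sub hg0
  have hts : ∑' n : ℕ,
      ((V (r + n)) ^ (-(1 / 2 : ℝ)) * (1 - V (r + n) / V (r + 1 + n)) ^ ((1 / 2 : ℝ)) *
        φ (r + 1 + n) x) = g 0 :=
    tendsto_nhds_unique hsummable.hasSum.tendsto_sum_nat htel
  rw [hts]
  simp only [hg, hG]
  have : r + ((0 : ℕ) : ℤ) = r := by push_cast; ring
  rw [this]
  rw [mul_comm (V r), div_mul_cancel₀ _ (hVpos r).ne']
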